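/- Let G₁ be a connected simple bipartite graph with an even number of edges admitting a cordial labeling f, and let G₂ be a simple graph with a cordial labeling g. Then the labeling h(u,v) = f(u) + g(v) mod 2 of the tensor product G₁ × G₂ is a cordial labeling: h is friendly and the numbers of 0-labeled and 1-labeled edges of G₁ × G₂ differ by at most 1 (in fact are equal). -/

import Mathlib

open Finset

/-- The tensor (categorical) product of two simple graphs. -/
def tensorProd {α β : Type*} (G : SimpleGraph α) (H : SimpleGraph β) :
    SimpleGraph (α × β) where
  Adj x y := G.Adj x.1 y.1 ∧ H.Adj x.2 y.2
  symm := ⟨fun _ _ h => ⟨h.1.symm, h.2.symm⟩⟩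
  loopless := ⟨fun x h => G.loopless.irrefl x.1 h.1⟩

instance {α β : Type*} (G : SimpleGraph α) (H : SimpleGraph β)
    [DecidableRel G.Adj] [DecidableRel H.Adj] :
    DecidableRel (tensorProd G H).Adj :=
  fun _ _ => inferInstanceAs (Decidable (_ ∧ _))

/-- Number of edges of `G` whose induced label (mod-2 sum of endpoint labels) is `c`. -/
def edgeCount {V : Type*} [Fintype V] [DecidableEq V] (G : SimpleGraph V)
    [DecidableRel G.Adj] (f : V → ZMod 2) (c : ZMod 2) : ℕ :=
  (G.edgeFinset.filter fun e =>
    Sym2.lift ⟨fun a b => f a + f b, fun _ _ => add_comm _ _⟩ e = c).card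

/-- A labeling is friendly if the vertex label counts differ by at most 1. -/
def Friendly {V : Type*} [Fintype V] (f : V → ZMod 2) : Prop :=
  |((Finset.univ.filter fun v => f v = 0).card : ℤ)
    - ((Finset.univ.filter fun v => f v = 1).card : ℤ)| ≤ 1

/-- A cordial labeling: friendly with roughly equal edge label counts. -/
def Cordial {V : Type*} [Fintype V] [DecidableEq V] (G : SimpleGraph V)
    [DecidableRel G.Adj] (f : V → ZMod 2) : Prop :=
  Friendly f ∧ |(edgeCount G f 0 : ℤ) - (edgeCount G f 1 : ℤ)| ≤ 1

/-! ### Auxiliary facts about `ZMod 2` -/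

lemma zmod2_not_eq_one (x : ZMod 2) : (¬ x = 1) ↔ x = 0 := by revert x; decide

lemma zmod2_not_eq_zero (x : ZMod 2) : (¬ x = 0) ↔ x = 1 := by revert x; decide

lemma zmod2_add_eq_zero (x y : ZMod 2) : x + y = 0 ↔ ((x = 1) = (y = 1)) := by
  revert x y; decide

lemma zmod2_add_eq_one (x y : ZMod 2) : x + y = 1 ↔ ((x = 1) = (y = 0)) := by
  revert x y; decide

/-! ### Dart counts -/

/-- Number of ordered adjacent pairs with label sum `c`. -/
def dartCount {V : Type*} [Fintype V] (G : SimpleGraph V)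
    [DecidableRel G.Adj] (f : V → ZMod 2) (c : ZMod 2) : ℕ :=
  (Finset.univ.filter fun p : V × V => G.Adj p.1 p.2 ∧ f p.1 + f p.2 = c).card

lemma dartCount_eq_twice_edgeCount {V : Type*} [Fintype V] [DecidableEq V]
    (G : SimpleGraph V) [DecidableRel G.Adj] (f : V → ZMod 2) (c : ZMod 2) :
    dartCount G f c = 2 * edgeCount G f c := by
  classical
  unfold dartCount edgeCount
  set t := G.edgeFinset.filter fun e =>
    Sym2.lift ⟨fun a b => f a + f b, fun _ _ => add_comm _ _⟩ e = c with ht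
  have hmap : ∀ p ∈ (Finset.univ.filter fun p : V × V =>
      G.Adj p.1 p.2 ∧ f p.1 + f p.2 = c), Sym2.mk p.1 p.2 ∈ t := by
    rintro ⟨a, b⟩ hp
    simp only [mem_filter, mem_univ, true_and] at hp
    simp only [ht, mem_filter, SimpleGraph.mem_edgeFinset, SimpleGraph.mem_edgeSet]
    exact ⟨hp.1, hp.2⟩
  have hfib : ∀ e ∈ t, ((Finset.univ.filter fun p : V × V =>
      G.Adj p.1 p.2 ∧ f p.1 + f p.2 = c).filter fun p => Sym2.mk p.1 p.2 = e).card = 2 := by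
    intro e he
    revert he
    induction e with
    | _ a b =>
      intro he
      simp only [ht, mem_filter, SimpleGraph.mem_edgeFinset, SimpleGraph.mem_edgeSet,
        Sym2.lift_mk] at he
      have hab : a ≠ b := he.1.ne
      have : ((Finset.univ.filter fun p : V × V => G.Adj p.1 p.2 ∧ f p.1 + f p.2 = c).filter
          fun p => Sym2.mk p.1 p.2 = s(a, b)) = {(a, b), (b, a)} := by
        ext ⟨x, y⟩
        simp only [mem_filter, mem_univ, true_and, mem_insert, mem_singleton,
          Prod.mk.injEq, Sym2.eq_iff]
        constructor
        · rintro ⟨-, h⟩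
          rcases h with ⟨rfl, rfl⟩ | ⟨rfl, rfl⟩
          · exact Or.inl ⟨rfl, rfl⟩
          · exact Or.inr ⟨rfl, rfl⟩
        · rintro (⟨rfl, rfl⟩ | ⟨rfl, rfl⟩)
          · exact ⟨⟨he.1, he.2⟩, Or.inl ⟨rfl, rfl⟩⟩
          · exact ⟨⟨he.1.symm, by rw [add_comm]; exact he.2⟩, Or.inr ⟨rfl, rfl⟩⟩
      rw [this, Finset.card_insert_of_notMem (by simp [hab]), Finset.card_singleton]
  rw [Finset.card_eq_sum_card_fiberwise hmap, Finset.sum_congr rfl hfib,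
    Finset.sum_const, smul_eq_mul, Nat.mul_comm]

lemma tensorProd_adj {α β : Type*} (G : SimpleGraph α) (H : SimpleGraph β)
    (x y : α × β) : (tensorProd G H).Adj x y ↔ G.Adj x.1 y.1 ∧ H.Adj x.2 y.2 := Iff.rfl

lemma dartCount_tensor {V₁ V₂ : Type*} [Fintype V₁] [Fintype V₂]
    (G₁ : SimpleGraph V₁) (G₂ : SimpleGraph V₂)
    [DecidableRel G₁.Adj] [DecidableRel G₂.Adj]
    (f : V₁ → ZMod 2) (g : V₂ → ZMod 2) :
    dartCount (tensorProd G₁ G₂) (fun p => f p.1 + g p.2) 0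
      = dartCount G₁ f 1 * dartCount G₂ g 1 + dartCount G₁ f 0 * dartCount G₂ g 0 ∧
    dartCount (tensorProd G₁ G₂) (fun p => f p.1 + g p.2) 1
      = dartCount G₁ f 1 * dartCount G₂ g 0 + dartCount G₁ f 0 * dartCount G₂ g 1 := by
  classical
  have key : ∀ c : ZMod 2, dartCount (tensorProd G₁ G₂) (fun p => f p.1 + g p.2) c
      = (((Finset.univ.filter fun q : V₁ × V₁ => G₁.Adj q.1 q.2) ×ˢ
         (Finset.univ.filter fun q : V₂ × V₂ => G₂.Adj q.1 q.2)).filter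
        (fun x : (V₁ × V₁) × (V₂ × V₂) =>
          (f x.1.1 + f x.1.2) + (g x.2.1 + g x.2.2) = c)).card := by
    intro c
    unfold dartCount
    refine Finset.card_equiv (Equiv.prodProdProdComm V₁ V₂ V₁ V₂) ?_
    rintro ⟨⟨a, b⟩, a', b'⟩
    simp only [mem_filter, mem_univ, true_and, mem_product, Equiv.prodProdProdComm,
      Equiv.coe_fn_mk, tensorProd_adj]
    constructor
    · rintro ⟨⟨h1, h2⟩, h3⟩
      exact ⟨⟨h1, h2⟩, by rw [← h3]; ring⟩
    · rintro ⟨⟨h1, h2⟩, h3⟩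
      exact ⟨⟨h1, h2⟩, by rw [← h3]; ring⟩
  have hff : ∀ (c : ZMod 2),
      ((Finset.univ.filter fun q : V₁ × V₁ => G₁.Adj q.1 q.2).filter
        fun q => f q.1 + f q.2 = c).card = dartCount G₁ f c := by
    intro c; rw [Finset.filter_filter]; rfl
  have hgg : ∀ (c : ZMod 2),
      ((Finset.univ.filter fun q : V₂ × V₂ => G₂.Adj q.1 q.2).filter
        fun q => g q.1 + g q.2 = c).card = dartCount G₂ g c := by
    intro c; rw [Finset.filter_filter]; rfl
  have hffn : ((Finset.univ.filter fun q : V₁ × V₁ => G₁.Adj q.1 q.2).filter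
        fun q => ¬ (f q.1 + f q.2 = 1)).card = dartCount G₁ f 0 := by
    rw [Finset.filter_congr (fun q _ => by simp [zmod2_not_eq_one] :
      ∀ q ∈ (Finset.univ.filter fun q : V₁ × V₁ => G₁.Adj q.1 q.2),
        (¬ (f q.1 + f q.2 = 1)) ↔ (f q.1 + f q.2 = 0)), hff 0]
  have hggn : ((Finset.univ.filter fun q : V₂ × V₂ => G₂.Adj q.1 q.2).filter
        fun q => ¬ (g q.1 + g q.2 = 1)).card = dartCount G₂ g 0 := by
    rw [Finset.filter_congr (fun q _ => by simp [zmod2_not_eq_one] :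
      ∀ q ∈ (Finset.univ.filter fun q : V₂ × V₂ => G₂.Adj q.1 q.2),
        (¬ (g q.1 + g q.2 = 1)) ↔ (g q.1 + g q.2 = 0)), hgg 0]
  have hggn0 : ((Finset.univ.filter fun q : V₂ × V₂ => G₂.Adj q.1 q.2).filter
        fun q => ¬ (g q.1 + g q.2 = 0)).card = dartCount G₂ g 1 := by
    rw [Finset.filter_congr (fun q _ => by simp [zmod2_not_eq_zero] :
      ∀ q ∈ (Finset.univ.filter fun q : V₂ × V₂ => G₂.Adj q.1 q.2),
        (¬ (g q.1 + g q.2 = 0)) ↔ (g q.1 + g q.2 = 1)), hgg 1]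
  constructor
  · rw [key 0]
    have hcongr : (((Finset.univ.filter fun q : V₁ × V₁ => G₁.Adj q.1 q.2) ×ˢ
         (Finset.univ.filter fun q : V₂ × V₂ => G₂.Adj q.1 q.2)).filter
        (fun x : (V₁ × V₁) × (V₂ × V₂) => (f x.1.1 + f x.1.2) + (g x.2.1 + g x.2.2) = 0))
        = (((Finset.univ.filter fun q : V₁ × V₁ => G₁.Adj q.1 q.2) ×ˢ
         (Finset.univ.filter fun q : V₂ × V₂ => G₂.Adj q.1 q.2)).filter
        (fun x : (V₁ × V₁) × (V₂ × V₂) =>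
          (f x.1.1 + f x.1.2 = 1) = (g x.2.1 + g x.2.2 = 1))) := by
      apply Finset.filter_congr
      intro x _
      simp [zmod2_add_eq_zero]
    have hcard := Finset.filter_product_card
      (Finset.univ.filter fun q : V₁ × V₁ => G₁.Adj q.1 q.2)
      (Finset.univ.filter fun q : V₂ × V₂ => G₂.Adj q.1 q.2)
      (fun q : V₁ × V₁ => f q.1 + f q.2 = 1) (fun q : V₂ × V₂ => g q.1 + g q.2 = 1)
    rw [hcongr, hcard, hff 1, hgg 1, hffn, hggn]
  · rw [key 1]
    have hcongr : (((Finset.univ.filter fun q : V₁ × V₁ => G₁.Adj q.1 q.2) ×ˢ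
         (Finset.univ.filter fun q : V₂ × V₂ => G₂.Adj q.1 q.2)).filter
        (fun x : (V₁ × V₁) × (V₂ × V₂) => (f x.1.1 + f x.1.2) + (g x.2.1 + g x.2.2) = 1))
        = (((Finset.univ.filter fun q : V₁ × V₁ => G₁.Adj q.1 q.2) ×ˢ
         (Finset.univ.filter fun q : V₂ × V₂ => G₂.Adj q.1 q.2)).filter
        (fun x : (V₁ × V₁) × (V₂ × V₂) =>
          (f x.1.1 + f x.1.2 = 1) = (g x.2.1 + g x.2.2 = 0))) := by
      apply Finset.filter_congr
      intro x _
      simp [zmod2_add_eq_one]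
    have hcard := Finset.filter_product_card
      (Finset.univ.filter fun q : V₁ × V₁ => G₁.Adj q.1 q.2)
      (Finset.univ.filter fun q : V₂ × V₂ => G₂.Adj q.1 q.2)
      (fun q : V₁ × V₁ => f q.1 + f q.2 = 1) (fun q : V₂ × V₂ => g q.1 + g q.2 = 0)
    rw [hcongr, hcard, hff 1, hgg 0, hffn, hggn0]

lemma edgeCount_add {V : Type*} [Fintype V] [DecidableEq V]
    (G : SimpleGraph V) [DecidableRel G.Adj] (f : V → ZMod 2) :
    edgeCount G f 0 + edgeCount G f 1 = G.edgeFinset.card := by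
  classical
  unfold edgeCount
  have hneg : (G.edgeFinset.filter fun e =>
        ¬ Sym2.lift ⟨fun a b => f a + f b, fun _ _ => add_comm _ _⟩ e = 0)
      = G.edgeFinset.filter fun e =>
        Sym2.lift ⟨fun a b => f a + f b, fun _ _ => add_comm _ _⟩ e = 1 := by
    apply Finset.filter_congr
    intro e _
    simp [zmod2_not_eq_zero]
  rw [← hneg]
  exact Finset.card_filter_add_card_filter_not _

theorem tensor_product_induced_labeling_cordial
    {V₁ V₂ : Type*} [Fintype V₁] [Fintype V₂] [DecidableEq V₁] [DecidableEq V₂]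
    (G₁ : SimpleGraph V₁) (G₂ : SimpleGraph V₂)
    [DecidableRel G₁.Adj] [DecidableRel G₂.Adj]
    (hconn : G₁.Connected) (hbip : G₁.Colorable 2)
    (heven : Even G₁.edgeFinset.card)
    (f : V₁ → ZMod 2) (g : V₂ → ZMod 2)
    (hf : Cordial G₁ f) (hg : Cordial G₂ g) :
    Cordial (tensorProd G₁ G₂) (fun p => f p.1 + g p.2) ∧
    edgeCount (tensorProd G₁ G₂) (fun p => f p.1 + g p.2) 0
      = edgeCount (tensorProd G₁ G₂) (fun p => f p.1 + g p.2) 1 := by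
  classical
  -- edge counts of G₁ are equal
  have hm : edgeCount G₁ f 0 = edgeCount G₁ f 1 := by
    have h1 := edgeCount_add G₁ f
    obtain ⟨k, hk⟩ := heven
    have h2 := hf.2
    rw [abs_le] at h2
    omega
  -- tensor edge counts
  obtain ⟨hT0, hT1⟩ := dartCount_tensor G₁ G₂ f g
  simp only [dartCount_eq_twice_edgeCount] at hT0 hT1
  have hedge : edgeCount (tensorProd G₁ G₂) (fun p => f p.1 + g p.2) 0
      = edgeCount (tensorProd G₁ G₂) (fun p => f p.1 + g p.2) 1 := by
    rw [hm] at hT0 hT1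
    omega
  -- friendliness
  have hfriendly : Friendly (fun p : V₁ × V₂ => f p.1 + g p.2) := by
    unfold Friendly
    have e0 : (Finset.univ.filter fun p : V₁ × V₂ => f p.1 + g p.2 = 0)
        = (Finset.univ ×ˢ Finset.univ).filter
          (fun p : V₁ × V₂ => (f p.1 = 1) = (g p.2 = 1)) := by
      rw [Finset.univ_product_univ]
      apply Finset.filter_congr
      intro p _
      simp [zmod2_add_eq_zero]
    have e1 : (Finset.univ.filter fun p : V₁ × V₂ => f p.1 + g p.2 = 1)
        = (Finset.univ ×ˢ Finset.univ).filter
          (fun p : V₁ × V₂ => (f p.1 = 1) = (g p.2 = 0)) := by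
      rw [Finset.univ_product_univ]
      apply Finset.filter_congr
      intro p _
      simp [zmod2_add_eq_one]
    have hc0 := Finset.filter_product_card (Finset.univ : Finset V₁)
      (Finset.univ : Finset V₂) (fun a => f a = 1) (fun b => g b = 1)
    have hc1 := Finset.filter_product_card (Finset.univ : Finset V₁)
      (Finset.univ : Finset V₂) (fun a => f a = 1) (fun b => g b = 0)
    rw [e0, e1, hc0, hc1]
    have r1 : (Finset.univ.filter fun x : V₁ => ¬ f x = 1)
        = Finset.univ.filter fun x => f x = 0 := by
      apply Finset.filter_congr; intro x _; simp [zmod2_not_eq_one]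
    have r2 : (Finset.univ.filter fun x : V₂ => ¬ g x = 1)
        = Finset.univ.filter fun x => g x = 0 := by
      apply Finset.filter_congr; intro x _; simp [zmod2_not_eq_one]
    have r3 : (Finset.univ.filter fun x : V₂ => ¬ g x = 0)
        = Finset.univ.filter fun x => g x = 1 := by
      apply Finset.filter_congr; intro x _; simp [zmod2_not_eq_zero]
    rw [r1, r2, r3]
    have hfa : |((Finset.univ.filter fun x : V₁ => f x = 0).card : ℤ)
        - ((Finset.univ.filter fun x : V₁ => f x = 1).card : ℤ)| ≤ 1 := hf.1
    have hgc : |((Finset.univ.filter fun x : V₂ => g x = 0).card : ℤ)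
        - ((Finset.univ.filter fun x : V₂ => g x = 1).card : ℤ)| ≤ 1 := hg.1
    push_cast
    set a : ℤ := ((Finset.univ.filter fun x : V₁ => f x = 0).card : ℤ)
    set b : ℤ := ((Finset.univ.filter fun x : V₁ => f x = 1).card : ℤ)
    set c : ℤ := ((Finset.univ.filter fun x : V₂ => g x = 0).card : ℤ)
    set d : ℤ := ((Finset.univ.filter fun x : V₂ => g x = 1).card : ℤ)
    have key : (b * d + a * c) - (b * c + a * d) = (a - b) * (c - d) := by ring
    calc |(b * d + a * c) - (b * c + a * d)|
        = |a - b| * |c - d| := by rw [key, abs_mul]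
      _ ≤ 1 * 1 := mul_le_mul hfa hgc (abs_nonneg _) (by norm_num)
      _ = 1 := by norm_num
  exact ⟨⟨hfriendly, by rw [hedge]; simp⟩, hedge⟩
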